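/- Suppose R_n : [0,T] → ℝ≥0 are bounded measurable functions, non-increasing in n pointwise, satisfying R_n(t) ≤ ε_n + 6 ∫_0^t G(R_n(s)) ds for all t ∈ [0,T], where ε_n → 0 and G : ℝ≥0 → ℝ≥0 is continuous, non-decreasing, concave, G(0) = 0, and ∫_{0+} dz/G(z) = ∞. Then R_n(t) → 0 for every t ∈ [0,T]. -/

import Mathlib

set_option maxHeartbeats 1000000


open MeasureTheory intervalIntegral Set

/-- If `Rₙ : [0,T] → ℝ≥0` are bounded measurable, non-increasing in `n` pointwise,
with `Rₙ(t) ≤ εₙ + 6 ∫_0^t G(Rₙ(s)) ds`, `εₙ → 0`, and `G` continuous, non-decreasing,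
concave, `G 0 = 0`, satisfying the Osgood condition, then `Rₙ(t) → 0` for every `t`. -/
theorem stmt8 (T : ℝ) (hT : 0 < T) (R : ℕ → ℝ → ℝ)
    (hR_meas : ∀ n, Measurable (R n))
    (hR_nonneg : ∀ n, ∀ t ∈ Icc (0:ℝ) T, 0 ≤ R n t)
    (hR_bdd : ∃ M : ℝ, ∀ n, ∀ t ∈ Icc (0:ℝ) T, R n t ≤ M)
    (hR_anti : ∀ t ∈ Icc (0:ℝ) T, ∀ m n : ℕ, m ≤ n → R n t ≤ R m t)
    (ε : ℕ → ℝ) (hε_nonneg : ∀ n, 0 ≤ ε n)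
    (hε_lim : Filter.Tendsto ε Filter.atTop (nhds 0))
    (G : ℝ → ℝ) (hG_cont : Continuous G)
    (hG_mono : ∀ ⦃x y : ℝ⦄, 0 ≤ x → x ≤ y → G x ≤ G y)
    (hG_conc : ConcaveOn ℝ (Ici 0) G) (hG0 : G 0 = 0)
    (hG_nonneg : ∀ x, 0 ≤ x → 0 ≤ G x)
    (hOsgood : ∀ η : ℝ, 0 < η →
      Filter.Tendsto (fun δ : ℝ => ∫ z in δ..η, 1 / G z)
        (nhdsWithin 0 (Ioi 0)) Filter.atTop)
    (hineq : ∀ n, ∀ t ∈ Icc (0:ℝ) T, R n t ≤ ε n + 6 * ∫ s in (0:ℝ)..t, G (R n s)) :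
    ∀ t ∈ Icc (0:ℝ) T, Filter.Tendsto (fun n => R n t) Filter.atTop (nhds 0) := by
  obtain ⟨M, hM⟩ := hR_bdd
  have hT0 : (0:ℝ) ∈ Icc (0:ℝ) T := ⟨le_refl 0, hT.le⟩
  have hM0 : 0 ≤ M := le_trans (hR_nonneg 0 0 hT0) (hM 0 0 hT0)
  set Q : ℝ → ℝ := fun t => ⨅ n, R n t with hQdef
  have hQmeas : Measurable Q := Measurable.iInf hR_meas
  have hbb : ∀ t ∈ Icc (0:ℝ) T, BddBelow (Set.range fun n => R n t) := by
    intro t ht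
    exact ⟨0, by rintro x ⟨n, rfl⟩; exact hR_nonneg n t ht⟩
  have hQ0 : ∀ t ∈ Icc (0:ℝ) T, 0 ≤ Q t := fun t ht => le_ciInf (fun n => hR_nonneg n t ht)
  have hQle : ∀ t ∈ Icc (0:ℝ) T, ∀ n, Q t ≤ R n t := fun t ht n => ciInf_le (hbb t ht) n
  have hQM : ∀ t ∈ Icc (0:ℝ) T, Q t ≤ M := fun t ht => (hQle t ht 0).trans (hM 0 t ht)
  have htend : ∀ t ∈ Icc (0:ℝ) T, Filter.Tendsto (fun n => R n t) Filter.atTop (nhds (Q t)) :=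
    fun t ht => tendsto_atTop_ciInf (fun m n h => hR_anti t ht m n h) (hbb t ht)
  -- G is positive on positives
  have hGpos : ∀ z : ℝ, 0 < z → 0 < G z := by
    intro p hp
    rcases (hG_nonneg p hp.le).lt_or_eq with h | h
    · exact h
    exfalso
    have key : ∀ᶠ δ in nhdsWithin (0:ℝ) (Ioi 0), (∫ z in δ..p, 1 / G z) = 0 := by
      filter_upwards [Ioo_mem_nhdsGT_of_mem (by exact ⟨le_refl 0, hp⟩ : (0:ℝ) ∈ Ico 0 p)]
        with δ hδ
      rw [intervalIntegral.integral_congr (g := fun _ => (0:ℝ)), intervalIntegral.integral_zero]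
      intro z hz
      rw [uIcc_of_le hδ.2.le] at hz
      have hz0 : 0 < z := lt_of_lt_of_le hδ.1 hz.1
      have : G z = 0 :=
        le_antisymm (h ▸ hG_mono hz0.le hz.2) (hG_nonneg z hz0.le)
      simp [this]
    have h1 : Filter.Tendsto (fun _ : ℝ => (0:ℝ)) (nhdsWithin (0:ℝ) (Ioi 0)) Filter.atTop :=
      (hOsgood p hp).congr' key
    obtain ⟨δ, hδ⟩ := (h1.eventually (Filter.eventually_ge_atTop (1:ℝ))).exists
    linarith
  -- integrability of G ∘ Q on subintervals of [0,T]
  have hsub : ∀ x y : ℝ, x ∈ Icc (0:ℝ) T → y ∈ Icc (0:ℝ) T → Set.uIoc x y ⊆ Icc (0:ℝ) T := by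
    intro x y hx hy
    exact fun z hz => ⟨le_trans (le_min hx.1 hy.1) hz.1.le, le_trans hz.2 (max_le hx.2 hy.2)⟩
  have hgmeas : Measurable fun s => G (Q s) := hG_cont.measurable.comp hQmeas
  have hgbound : ∀ s ∈ Icc (0:ℝ) T, G (Q s) ∈ Icc (0:ℝ) (G M) := by
    intro s hs
    exact ⟨hG_nonneg _ (hQ0 s hs), hG_mono (hQ0 s hs) (hQM s hs)⟩
  have hgint : ∀ x y : ℝ, x ∈ Icc (0:ℝ) T → y ∈ Icc (0:ℝ) T →
      IntervalIntegrable (fun s => G (Q s)) volume x y := by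
    intro x y hx hy
    rw [intervalIntegrable_iff]
    apply Measure.integrableOn_of_bounded (M := G M) measure_Ioc_lt_top.ne
      hgmeas.aestronglyMeasurable
    filter_upwards [ae_restrict_mem measurableSet_uIoc] with s hs
    have hs' : s ∈ Icc (0:ℝ) T := hsub x y hx hy hs
    rw [Real.norm_eq_abs, abs_of_nonneg (hgbound s hs').1]
    exact (hgbound s hs').2
  -- limit inequality
  have hlim_ineq : ∀ t ∈ Icc (0:ℝ) T, Q t ≤ 6 * ∫ s in (0:ℝ)..t, G (Q s) := by
    intro t ht
    have h0t : (0:ℝ) ≤ t := ht.1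
    have hDCT : Filter.Tendsto (fun n => ∫ s in (0:ℝ)..t, G (R n s)) Filter.atTop
        (nhds (∫ s in (0:ℝ)..t, G (Q s))) := by
      simp only [intervalIntegral.integral_of_le h0t]
      apply MeasureTheory.tendsto_integral_of_dominated_convergence (fun _ => G M)
      · intro n; exact (hG_cont.measurable.comp (hR_meas n)).aestronglyMeasurable
      · exact integrable_const _
      · intro n
        filter_upwards [ae_restrict_mem measurableSet_Ioc] with s hs
        have hs' : s ∈ Icc (0:ℝ) T := ⟨hs.1.le, hs.2.trans ht.2⟩
        rw [Real.norm_eq_abs, abs_of_nonneg (hG_nonneg _ (hR_nonneg n s hs'))]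
        exact hG_mono (hR_nonneg n s hs') (hM n s hs')
      · filter_upwards [ae_restrict_mem measurableSet_Ioc] with s hs
        have hs' : s ∈ Icc (0:ℝ) T := ⟨hs.1.le, hs.2.trans ht.2⟩
        exact hG_cont.continuousAt.tendsto.comp (htend s hs')
    have h2 : Filter.Tendsto (fun n => ε n + 6 * ∫ s in (0:ℝ)..t, G (R n s)) Filter.atTop
        (nhds (0 + 6 * ∫ s in (0:ℝ)..t, G (Q s))) := hε_lim.add (hDCT.const_mul 6)
    have h3 := ge_of_tendsto' h2 (fun n => (hQle t ht n).trans (hineq n t ht))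
    linarith
  set v : ℝ → ℝ := fun t => 6 * ∫ s in (0:ℝ)..t, G (Q s) with hvdef
  have hv0 : v 0 = 0 := by simp [hvdef]
  have hvdiff : ∀ s t : ℝ, s ∈ Icc (0:ℝ) T → t ∈ Icc (0:ℝ) T →
      v t - v s = 6 * ∫ σ in s..t, G (Q σ) := by
    intro s t hs ht
    have := intervalIntegral.integral_add_adjacent_intervals
      (hgint 0 s hT0 hs) (hgint s t hs ht)
    simp only [hvdef]
    linarith [this]
  have hvmono : ∀ s t : ℝ, s ∈ Icc (0:ℝ) T → t ∈ Icc (0:ℝ) T → s ≤ t → v s ≤ v t := by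
    intro s t hs ht hst
    have h1 : 0 ≤ ∫ σ in s..t, G (Q σ) := by
      apply intervalIntegral.integral_nonneg hst
      intro u hu
      exact hG_nonneg _ (hQ0 u ⟨le_trans hs.1 hu.1, le_trans hu.2 ht.2⟩)
    nlinarith [hvdiff s t hs ht]
  have hvnonneg : ∀ t ∈ Icc (0:ℝ) T, 0 ≤ v t := by
    intro t ht
    have := hvmono 0 t hT0 ht ht.1
    linarith [hv0]
  have hQlev : ∀ t ∈ Icc (0:ℝ) T, Q t ≤ v t := hlim_ineq
  -- growth bounds
  have hgrow : ∀ s t : ℝ, s ∈ Icc (0:ℝ) T → t ∈ Icc (0:ℝ) T → s ≤ t →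
      v t - v s ≤ 6 * (t - s) * G (v t) := by
    intro s t hs ht hst
    have hmem : ∀ u ∈ Icc s t, u ∈ Icc (0:ℝ) T :=
      fun u hu => ⟨le_trans hs.1 hu.1, le_trans hu.2 ht.2⟩
    have h1 : (∫ σ in s..t, G (Q σ)) ≤ ∫ _ in s..t, G (v t) := by
      apply intervalIntegral.integral_mono_on hst (hgint s t hs ht) intervalIntegrable_const
      intro u hu
      exact hG_mono (hQ0 u (hmem u hu))
        (le_trans (hQlev u (hmem u hu)) (hvmono u t (hmem u hu) ht hu.2))
    rw [intervalIntegral.integral_const, smul_eq_mul] at h1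
    have := hvdiff s t hs ht
    nlinarith
  have hlip : ∀ s t : ℝ, s ∈ Icc (0:ℝ) T → t ∈ Icc (0:ℝ) T → s ≤ t →
      v t - v s ≤ 6 * (t - s) * G M := by
    intro s t hs ht hst
    have hmem : ∀ u ∈ Icc s t, u ∈ Icc (0:ℝ) T :=
      fun u hu => ⟨le_trans hs.1 hu.1, le_trans hu.2 ht.2⟩
    have h1 : (∫ σ in s..t, G (Q σ)) ≤ ∫ _ in s..t, G M := by
      apply intervalIntegral.integral_mono_on hst (hgint s t hs ht) intervalIntegrable_const
      intro u hu
      exact (hgbound u (hmem u hu)).2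
    rw [intervalIntegral.integral_const, smul_eq_mul] at h1
    have := hvdiff s t hs ht
    nlinarith
  -- integrability of 1/G on intervals to the right of a positive number
  have hIint : ∀ c x y : ℝ, 0 < c → c ≤ x → x ≤ y →
      IntervalIntegrable (fun z => 1 / G z) volume x y := by
    intro c x y hc hcx hxy
    apply ContinuousOn.intervalIntegrable_of_Icc hxy
    have hGz : ∀ z ∈ Icc x y, G z ≠ 0 := by
      intro z hz
      exact (lt_of_lt_of_le (hGpos c hc) (hG_mono hc.le (hcx.trans hz.1))).ne'
    exact ContinuousOn.div continuousOn_const hG_cont.continuousOn hGz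
  -- v vanishes identically on [0,T]
  have hvzero : ∀ t ∈ Icc (0:ℝ) T, v t = 0 := by
    by_contra hcon
    push_neg at hcon
    obtain ⟨t₀, ht₀, hvt₀⟩ := hcon
    have hvpos : 0 < v t₀ := (hvnonneg t₀ ht₀).lt_of_ne (Ne.symm hvt₀)
    set S : Set ℝ := {t | t ∈ Icc (0:ℝ) t₀ ∧ v t = 0} with hSdef
    have hS0 : (0:ℝ) ∈ S := ⟨⟨le_refl 0, ht₀.1⟩, hv0⟩
    have hSbdd : BddAbove S := ⟨t₀, fun s hs => hs.1.2⟩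
    set τ := sSup S with hτdef
    have hτmem : τ ∈ Icc (0:ℝ) t₀ := ⟨le_csSup hSbdd hS0, csSup_le ⟨0, hS0⟩ fun s hs => hs.1.2⟩
    have hτIcc : τ ∈ Icc (0:ℝ) T := ⟨hτmem.1, hτmem.2.trans ht₀.2⟩
    have hGM : 0 ≤ G M := hG_nonneg M hM0
    have hvτ : v τ = 0 := by
      refine le_antisymm ?_ (hvnonneg τ hτIcc)
      by_contra hpos
      push_neg at hpos
      obtain ⟨s, hsS, hs⟩ := exists_lt_of_lt_csSup ⟨0, hS0⟩
        (show τ - v τ / (6 * (G M + 1)) < τ by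
          have : 0 < v τ / (6 * (G M + 1)) := by positivity
          linarith)
      have hsIcc : s ∈ Icc (0:ℝ) T := ⟨hsS.1.1, hsS.1.2.trans ht₀.2⟩
      have hsτ : s ≤ τ := le_csSup hSbdd hsS
      have hl := hlip s τ hsIcc hτIcc hsτ
      rw [hsS.2] at hl
      have h1 : τ - s < v τ / (6 * (G M + 1)) := by linarith
      have h2 : v τ / (6 * (G M + 1)) * (G M + 1) = v τ / 6 := by
        field_simp
      nlinarith [hsτ, hGM, hpos]
    have hτlt : τ < t₀ := by
      rcases hτmem.2.lt_or_eq with h | h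
      · exact h
      · exact absurd (h ▸ hvτ) hvt₀
    have hvbpos : ∀ b : ℝ, τ < b → b ≤ t₀ → 0 < v b := by
      intro b hb hbt
      have hbIcc : b ∈ Icc (0:ℝ) T := ⟨hτmem.1.trans hb.le, hbt.trans ht₀.2⟩
      rcases (hvnonneg b hbIcc).lt_or_eq with h | h
      · exact h
      · exact absurd (le_csSup hSbdd ⟨⟨hbIcc.1, hbt⟩, h.symm⟩) (not_le.2 hb)
    -- uniform bound on the Osgood integral
    have key : ∀ a : ℝ, τ < a → a ≤ t₀ → (∫ z in (v a)..(v t₀), 1 / G z) ≤ 6 * T := by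
      intro a ha hat
      have haIcc : a ∈ Icc (0:ℝ) T := ⟨hτmem.1.trans ha.le, hat.trans ht₀.2⟩
      have hva_pos : 0 < v a := hvbpos a ha hat
      have hGva : 0 < G (v a) := hGpos _ hva_pos
      set D : ℝ := G (v a) with hDdef
      set K : ℝ := (G (v t₀) - D) / D with hKdef
      have claim : ∀ N : ℕ, 1 ≤ N →
          (∫ z in (v a)..(v t₀), 1 / G z) ≤ 6 * (t₀ - a) + 6 * ((t₀ - a) / N) * K := by
        intro N hN
        have hNpos : (0:ℝ) < N := by exact_mod_cast hN
        set w : ℝ := (t₀ - a) / N with hwdef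
        have hw0 : 0 ≤ w := div_nonneg (by linarith) hNpos.le
        have hNw : a + N * w = t₀ := by
          rw [hwdef, ← mul_div_assoc, mul_div_cancel_left₀ _ hNpos.ne']; ring
        have hsmem : ∀ i : ℕ, i ≤ N → a + i * w ∈ Icc (0:ℝ) T := by
          intro i hi
          have hiw : (i:ℝ) * w ≤ N * w := by
            apply mul_le_mul_of_nonneg_right _ hw0
            exact_mod_cast hi
          have h0i : 0 ≤ (i:ℝ) * w := by positivity
          exact ⟨by linarith [haIcc.1], by nlinarith [ht₀.2]⟩
        have hsa : ∀ i : ℕ, a ≤ a + i * w := by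
          intro i
          have : 0 ≤ (i:ℝ) * w := by positivity
          linarith
        have hstep : ∀ i : ℕ, i + 1 ≤ N →
            (∫ z in (v (a + i * w))..(v (a + (i + 1 : ℕ) * w)), 1 / G z) ≤
              6 * w + 6 * w * (G (v (a + (i + 1 : ℕ) * w)) - G (v (a + i * w))) / D := by
          intro i hi
          set x := a + i * w with hxdef
          set y := a + (i + 1 : ℕ) * w with hydef
          have hxy : x ≤ y := by
            simp only [hxdef, hydef]
            push_cast
            nlinarith
          have hxIcc : x ∈ Icc (0:ℝ) T := hsmem i (le_trans (Nat.le_succ i) hi)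
          have hyIcc : y ∈ Icc (0:ℝ) T := hsmem (i+1) hi
          have hvxy : v x ≤ v y := hvmono x y hxIcc hyIcc hxy
          have hvax : v a ≤ v x := hvmono a x haIcc hxIcc (hsa i)
          have hGvx : 0 < G (v x) := lt_of_lt_of_le hGva (hG_mono hva_pos.le hvax)
          have hGxy : G (v x) ≤ G (v y) := hG_mono (hva_pos.le.trans hvax) hvxy
          have hGax : D ≤ G (v x) := hG_mono hva_pos.le hvax
          have h1 : (∫ z in (v x)..(v y), 1 / G z) ≤ (v y - v x) * (1 / G (v x)) := by
            have := intervalIntegral.integral_mono_on hvxy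
              (hIint (v a) (v x) (v y) hva_pos hvax hvxy)
              (_root_.intervalIntegrable_const (c := 1 / G (v x)))
              (fun z hz => one_div_le_one_div_of_le hGvx (hG_mono (hva_pos.le.trans hvax) hz.1))
            rwa [intervalIntegral.integral_const, smul_eq_mul] at this
          have h2 : v y - v x ≤ 6 * w * G (v y) := by
            have hg := hgrow x y hxIcc hyIcc hxy
            have hyx : y - x = w := by
              simp only [hxdef, hydef]; push_cast; ring
            rw [hyx] at hg
            linarith
          have h3 : (v y - v x) * (1 / G (v x)) ≤ 6 * w * G (v y) * (1 / G (v x)) := by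
            apply mul_le_mul_of_nonneg_right h2
            positivity
          have h4 : 6 * w * G (v y) * (1 / G (v x)) =
              6 * w * (G (v x)) * (1 / G (v x)) + 6 * w * (G (v y) - G (v x)) * (1 / G (v x)) := by
            ring
          have h5 : 6 * w * (G (v x)) * (1 / G (v x)) = 6 * w := by
            field_simp
          have h6 : 6 * w * (G (v y) - G (v x)) * (1 / G (v x)) ≤
              6 * w * (G (v y) - G (v x)) * (1 / D) := by
            apply mul_le_mul_of_nonneg_left (one_div_le_one_div_of_le hGva hGax)
            exact mul_nonneg (by positivity) (by linarith [hGxy])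
          have h7 : 6 * w * (G (v y) - G (v x)) * (1 / D) =
              6 * w * (G (v y) - G (v x)) / D := by
            ring
          calc (∫ z in (v x)..(v y), 1 / G z)
              ≤ (v y - v x) * (1 / G (v x)) := h1
            _ ≤ 6 * w * G (v y) * (1 / G (v x)) := h3
            _ = 6 * w + 6 * w * (G (v y) - G (v x)) * (1 / G (v x)) := by rw [h4, h5]
            _ ≤ 6 * w + 6 * w * (G (v y) - G (v x)) * (1 / D) := by linarith
            _ = 6 * w + 6 * w * (G (v y) - G (v x)) / D := by rw [h7]
        have hind : ∀ i : ℕ, i ≤ N →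
            (∫ z in (v a)..(v (a + i * w)), 1 / G z) ≤
              6 * (i * w) + 6 * w * (G (v (a + i * w)) - D) / D := by
          intro i
          induction i with
          | zero =>
            intro _
            simp [hDdef]
          | succ i ih =>
            intro hi
            have hi' : i ≤ N := le_trans (Nat.le_succ i) hi
            have IH := ih hi'
            have hxIcc := hsmem i hi'
            have hyIcc := hsmem (i+1) hi
            have hvax : v a ≤ v (a + i * w) := hvmono _ _ haIcc hxIcc (hsa i)
            have hxy : a + (i:ℝ) * w ≤ a + ((i+1:ℕ):ℝ) * w := by
              push_cast; nlinarith
            have hvxy := hvmono _ _ hxIcc hyIcc hxy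
            have hadd := intervalIntegral.integral_add_adjacent_intervals
              (hIint (v a) (v a) (v (a + i * w)) hva_pos le_rfl hvax)
              (hIint (v a) (v (a + i * w)) (v (a + (i+1:ℕ) * w)) hva_pos hvax hvxy)
            have hst := hstep i hi
            have hcast : (((i+1:ℕ)):ℝ) = (i:ℝ) + 1 := by push_cast; ring
            simp only [hcast] at hst hadd ⊢
            rw [← hadd]
            have e : 6 * ((i:ℝ) * w) + 6 * w * (G (v (a + i * w)) - D) / D +
                (6 * w + 6 * w * (G (v (a + ((i:ℝ) + 1) * w)) - G (v (a + i * w))) / D) =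
                6 * (((i:ℝ) + 1) * w) + 6 * w * (G (v (a + ((i:ℝ) + 1) * w)) - D) / D := by
              field_simp
              ring
            linarith [IH, hst, e]
        have hfin := hind N le_rfl
        rw [hNw] at hfin
        have hNwval : (N:ℝ) * w = t₀ - a := by linarith [hNw]
        have e2 : 6 * w * (G (v t₀) - D) / D = 6 * ((t₀ - a) / N) * K := by
          rw [hKdef, hwdef]
          ring
        rw [hNwval, e2] at hfin
        exact hfin
      have htd : Filter.Tendsto (fun N : ℕ => 6 * (t₀ - a) + 6 * ((t₀ - a) / N) * K)
          Filter.atTop (nhds (6 * (t₀ - a) + 6 * 0 * K)) :=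
        tendsto_const_nhds.add
          (((tendsto_const_div_atTop_nhds_zero_nat (t₀ - a)).const_mul 6).mul_const K)
      have hle := ge_of_tendsto htd (Filter.eventually_atTop.2 ⟨1, fun N hN => claim N hN⟩)
      have : 6 * (t₀ - a) ≤ 6 * T := by nlinarith [haIcc.1, ht₀.2]
      nlinarith [hle]
    -- sequence approaching τ from the right
    set aa : ℕ → ℝ := fun k => τ + (t₀ - τ) / ((k:ℝ) + 1) with haadef
    have hak : ∀ k : ℕ, τ < aa k ∧ aa k ≤ t₀ := by
      intro k
      have hp : 0 < (t₀ - τ) / ((k:ℝ) + 1) := by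
        apply div_pos (by linarith) (by positivity)
      constructor
      · simp only [haadef]; linarith
      · simp only [haadef]
        have := div_le_self (by linarith : (0:ℝ) ≤ t₀ - τ)
          (by push_cast; linarith [Nat.cast_nonneg (α := ℝ) k] : (1:ℝ) ≤ (k:ℝ) + 1)
        linarith
    have hakIcc : ∀ k, aa k ∈ Icc (0:ℝ) T :=
      fun k => ⟨hτmem.1.trans (hak k).1.le, (hak k).2.trans ht₀.2⟩
    have hbound : ∀ k : ℕ, v (aa k) ≤ (6 * (t₀ - τ) * G M) * (1 / ((k:ℝ) + 1)) := by
      intro k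
      have hl := hlip τ (aa k) hτIcc (hakIcc k) (hak k).1.le
      rw [hvτ] at hl
      have hak1 : aa k - τ = (t₀ - τ) / ((k:ℝ) + 1) := by simp [haadef]
      rw [hak1] at hl
      have he : 6 * ((t₀ - τ) / ((k:ℝ) + 1)) * G M =
          (6 * (t₀ - τ) * G M) * (1 / ((k:ℝ) + 1)) := by ring
      linarith
    have htends : Filter.Tendsto (fun k => v (aa k)) Filter.atTop (nhdsWithin 0 (Ioi 0)) := by
      apply tendsto_nhdsWithin_of_tendsto_nhds_of_eventually_within
      · have h1 : Filter.Tendsto (fun k : ℕ => (6 * (t₀ - τ) * G M) * (1 / ((k:ℝ) + 1)))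
            Filter.atTop (nhds 0) := by
          have := tendsto_one_div_add_atTop_nhds_zero_nat.const_mul (6 * (t₀ - τ) * G M)
          simpa using this
        apply tendsto_of_tendsto_of_tendsto_of_le_of_le tendsto_const_nhds h1
        · intro k; exact hvnonneg _ (hakIcc k)
        · exact hbound
      · exact Filter.Eventually.of_forall fun k => hvbpos (aa k) (hak k).1 (hak k).2
    have hcomp := (hOsgood (v t₀) hvpos).comp htends
    obtain ⟨k, hk⟩ := (hcomp.eventually (Filter.eventually_ge_atTop (6 * T + 1))).exists
    have hkey := key (aa k) (hak k).1 (hak k).2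
    simp only [Function.comp] at hk
    linarith
  -- conclude
  intro t ht
  have hQz : Q t = 0 := le_antisymm ((hQlev t ht).trans (hvzero t ht).le) (hQ0 t ht)
  have := htend t ht
  rwa [hQz] at this
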